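/- Let E ∈ K^{m×σ}, M ∈ K^{σ×σ}, s ∈ ℕ^m, δ a bound on the degree of the minimal polynomial of M, and let (δ_1,…,δ_m) be the s-minimal degree of (E,M). If p ∈ K[X]^{1×m} with deg p ≤ δ is an interpolant for (E,M) with s-pivot index c, then its s-pivot degree satisfies deg(p_c) ≥ δ_c. Moreover, for every c there exists an interpolant p for (E,M) with deg p ≤ δ, s-pivot index c, and s-pivot degree exactly δ_c. -/

import Mathlib

open Polynomial Matrix

/-- Priority comparison on pairs `(c,d)`: lexicographic on `(s_c + d, c)`. -/
def keyLt {m : ℕ} (s : Fin m → ℕ) (x y : Fin m × ℕ) : Prop :=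
  s x.1 + x.2 < s y.1 + y.2 ∨ (s x.1 + x.2 = s y.1 + y.2 ∧ x.1 < y.1)

/-- Row `(c,d)` of the priority-permuted Krylov matrix `K_{δ,s}(E,M)` (with rows
`E·M^d` indexed by pairs and ordered by `keyLt`) is a `K`-linear combination of the
rows preceding it. -/
def DepEarlier {K : Type*} [Field K] {m σ : ℕ} (E : Matrix (Fin m) (Fin σ) K)
    (M : Matrix (Fin σ) (Fin σ) K) (s : Fin m → ℕ) (δ : ℕ) (c : Fin m) (d : ℕ) : Prop :=
  Matrix.vecMul (E c) (M ^ d) ∈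
    Submodule.span K
      ((fun y : Fin m × ℕ => Matrix.vecMul (E y.1) (M ^ y.2)) ''
        {y | y.2 ≤ δ ∧ keyLt s y (c, d)})

/-- `dm` is the `s`-minimal degree of `(E,M)`: `dm c` is the smallest `d` such that
row `(c,d)` of `K_{δ,s}(E,M)` is a linear combination of the earlier rows. -/
def IsMinDeg {K : Type*} [Field K] {m σ : ℕ} (E : Matrix (Fin m) (Fin σ) K)
    (M : Matrix (Fin σ) (Fin σ) K) (s : Fin m → ℕ) (δ : ℕ) (dm : Fin m → ℕ) : Prop :=
  ∀ c, DepEarlier E M s δ c (dm c) ∧ ∀ d, d < dm c → ¬ DepEarlier E M s δ c d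

/-- `p` is an interpolant for `(E,M)`: `∑ c p_c · e_c = 0` with `p · e = e · p(M)`. -/
def IsInterpolant {K : Type*} [Field K] {m σ : ℕ} (E : Matrix (Fin m) (Fin σ) K)
    (M : Matrix (Fin σ) (Fin σ) K) (p : Fin m → Polynomial K) : Prop :=
  ∑ c, Matrix.vecMul (E c) (Polynomial.aeval M (p c)) = 0

/-- The `s`-row degree of a row vector `p`. -/
noncomputable def rowDegVec {K : Type*} [Field K] {m : ℕ} (s : Fin m → ℕ)
    (p : Fin m → Polynomial K) : WithBot ℕ :=
  Finset.univ.sup fun j => (p j).degree + (s j : WithBot ℕ)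

/-- `c` is the `s`-pivot index of `p`. -/
noncomputable def IsPivotIdx {K : Type*} [Field K] {m : ℕ} (s : Fin m → ℕ)
    (p : Fin m → Polynomial K) (c : Fin m) : Prop :=
  ((p c).degree + (s c : WithBot ℕ) = rowDegVec s p) ∧
    ∀ c', ((p c').degree + (s c' : WithBot ℕ) = rowDegVec s p) → c' ≤ c

section Aux

variable {K : Type*} [Field K] {m σ δ : ℕ}

private lemma vecMulSum {ι : Type*} (t : Finset ι) (v : Fin σ → K)
    (f : ι → Matrix (Fin σ) (Fin σ) K) :
    Matrix.vecMul v (∑ i ∈ t, f i) = ∑ i ∈ t, Matrix.vecMul v (f i) := by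
  classical
  induction t using Finset.cons_induction with
  | empty => simp
  | cons a t ha ih =>
    rw [Finset.sum_cons, Finset.sum_cons, Matrix.vecMul_add, ih]

private lemma vecMulSmul (v : Fin σ → K) (a : K) (A : Matrix (Fin σ) (Fin σ) K) :
    Matrix.vecMul v (a • A) = a • Matrix.vecMul v A := by
  ext j
  simp [Matrix.vecMul, dotProduct, Finset.mul_sum, mul_left_comm]

private lemma vecMul_aeval (M : Matrix (Fin σ) (Fin σ) K) (v : Fin σ → K)
    {f : Polynomial K} {n : ℕ} (hf : f.natDegree < n) :
    Matrix.vecMul v (Polynomial.aeval M f)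
      = ∑ d ∈ Finset.range n, f.coeff d • Matrix.vecMul v (M ^ d) := by
  rw [Polynomial.aeval_eq_sum_range' hf, vecMulSum]
  exact Finset.sum_congr rfl fun d _ => vecMulSmul _ _ _

private lemma interp_expand (M : Matrix (Fin σ) (Fin σ) K) (E : Matrix (Fin m) (Fin σ) K)
    {p : Fin m → Polynomial K} (hp : ∀ i, (p i).degree ≤ (δ : WithBot ℕ))
    (h : IsInterpolant E M p) :
    ∑ y ∈ Finset.univ ×ˢ Finset.range (δ + 1),
      (p y.1).coeff y.2 • Matrix.vecMul (E y.1) (M ^ y.2) = 0 := by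
  rw [Finset.sum_product]
  calc ∑ j, ∑ d ∈ Finset.range (δ + 1), (p j).coeff d • Matrix.vecMul (E j) (M ^ d)
      = ∑ j, Matrix.vecMul (E j) (Polynomial.aeval M (p j)) := by
        refine Finset.sum_congr rfl fun j _ => ?_
        rw [vecMul_aeval M (E j)
          (Nat.lt_succ_of_le (Polynomial.natDegree_le_iff_degree_le.mpr (hp j)))]
    _ = 0 := h

private lemma depEarlier_of_rep {ι : Type*} (M : Matrix (Fin σ) (Fin σ) K)
    (E : Matrix (Fin m) (Fin σ) K) (s : Fin m → ℕ) {c : Fin m} {d : ℕ}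
    (T : Finset ι) (idx : ι → Fin m × ℕ) (coefs : ι → K)
    (hT : ∀ i ∈ T, coefs i ≠ 0 → (idx i).2 ≤ δ ∧ keyLt s (idx i) (c, d))
    (hrep : Matrix.vecMul (E c) (M ^ d)
      = ∑ i ∈ T, coefs i • Matrix.vecMul (E (idx i).1) (M ^ (idx i).2)) :
    DepEarlier E M s δ c d := by
  rw [DepEarlier, hrep]
  refine Submodule.sum_mem _ fun i hi => ?_
  by_cases hz : coefs i = 0
  · simp [hz]
  · exact Submodule.smul_mem _ _ (Submodule.subset_span ⟨idx i, hT i hi hz, rfl⟩)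

private lemma dep_delta (M : Matrix (Fin σ) (Fin σ) K) (E : Matrix (Fin m) (Fin σ) K)
    (s : Fin m → ℕ) (hδ : (minpoly K M).natDegree ≤ δ) (c : Fin m) :
    DepEarlier E M s δ c δ := by
  rcases Nat.eq_zero_or_pos σ with hσ | hσ
  · subst hσ
    have h0 : Matrix.vecMul (E c) (M ^ δ) = 0 := Subsingleton.elim _ _
    rw [DepEarlier, h0]
    exact Submodule.zero_mem _
  · haveI : NeZero σ := ⟨hσ.ne'⟩
    haveI : Nonempty (Fin σ) := ⟨⟨0, hσ⟩⟩
    have hint : IsIntegral K M := Algebra.IsIntegral.isIntegral M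
    have hmo : (minpoly K M).Monic := minpoly.monic hint
    set r : Polynomial K := (Polynomial.X ^ δ) %ₘ minpoly K M with hr
    have hMr : M ^ δ = Polynomial.aeval M r := by
      conv_lhs => rw [show M ^ δ = Polynomial.aeval M ((Polynomial.X : Polynomial K) ^ δ) by simp]
      conv_lhs => rw [← Polynomial.modByMonic_add_div ((Polynomial.X : Polynomial K) ^ δ) (minpoly K M)]
      rw [map_add, _root_.map_mul, minpoly.aeval, zero_mul, add_zero]
    by_cases hr0 : r = 0
    · rw [DepEarlier, hMr, hr0]
      simp
    · have hdeg : r.natDegree < δ := by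
        have h1 : r.degree < (minpoly K M).degree := Polynomial.degree_modByMonic_lt _ hmo
        have h2 : r.natDegree < (minpoly K M).natDegree :=
          Polynomial.natDegree_lt_natDegree hr0 h1
        omega
      refine depEarlier_of_rep M E s (Finset.range δ) (fun d => (c, d)) (fun d => r.coeff d)
        (fun d hd _ => by
          have hdlt := Finset.mem_range.mp hd
          refine ⟨le_of_lt hdlt, Or.inl ?_⟩
          show s c + d < s c + δ
          omega) ?_
      rw [hMr, vecMul_aeval M (E c) hdeg]

private lemma le_rowDeg (s : Fin m → ℕ) (p : Fin m → Polynomial K) (j : Fin m) :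
    (p j).degree + (s j : WithBot ℕ) ≤ rowDegVec s p := by
  exact Finset.le_sup (f := fun j => (p j).degree + (s j : WithBot ℕ)) (Finset.mem_univ j)

end Aux

/-- any interpolant of degree at most `δ` with `s`-pivot index `c` has
`s`-pivot degree at least `δ_c`, and for each `c` there is an interpolant of degree at
most `δ` with `s`-pivot index `c` and `s`-pivot degree exactly `δ_c`. -/
theorem pivot_degree_ge_minimal_degree_and_exists
    {K : Type*} [Field K] {m σ δ : ℕ}
    (M : Matrix (Fin σ) (Fin σ) K) (E : Matrix (Fin m) (Fin σ) K) (s : Fin m → ℕ)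
    (hδ : (minpoly K M).natDegree ≤ δ)
    (dm : Fin m → ℕ) (hdm : IsMinDeg E M s δ dm) :
    (∀ p : Fin m → Polynomial K, p ≠ 0 → (∀ i, (p i).degree ≤ (δ : WithBot ℕ)) →
      IsInterpolant E M p → ∀ c, IsPivotIdx s p c → dm c ≤ (p c).natDegree)
    ∧ (∀ c : Fin m, ∃ p : Fin m → Polynomial K, p ≠ 0 ∧
        (∀ i, (p i).degree ≤ (δ : WithBot ℕ)) ∧ IsInterpolant E M p ∧
        IsPivotIdx s p c ∧ (p c).natDegree = dm c) := by
  classical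
  have hdmδ : ∀ c, dm c ≤ δ := by
    intro c
    by_contra h
    exact (hdm c).2 δ (by omega) (dep_delta M E s hδ c)
  constructor
  · -- Part 1
    intro p hp0 hpdeg hpint c hpiv
    by_contra hcon
    have hlt : (p c).natDegree < dm c := by omega
    set d0 := (p c).natDegree with hd0
    -- p c ≠ 0
    have hrow_ne : rowDegVec s p ≠ ⊥ := by
      obtain ⟨j, hj⟩ := Function.ne_iff.mp hp0
      intro hb
      have hle : (p j).degree + (s j : WithBot ℕ) ≤ rowDegVec s p := le_rowDeg s p j
      have hle' : (p j).degree + (s j : WithBot ℕ) = ⊥ := by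
        rw [hb] at hle; exact le_bot_iff.mp hle
      rcases WithBot.add_eq_bot.mp hle' with h | h
      · exact hj (Polynomial.degree_eq_bot.mp h)
      · exact WithBot.coe_ne_bot h
    have hpc0 : p c ≠ 0 := by
      intro h
      apply hrow_ne
      rw [← hpiv.1, h, Polynomial.degree_zero, WithBot.bot_add]
    have hrowval : rowDegVec s p = ((d0 + s c : ℕ) : WithBot ℕ) := by
      rw [← hpiv.1, Polynomial.degree_eq_natDegree hpc0, ← hd0, Nat.cast_add]
    -- sum representation
    have hsum := interp_expand M E hpdeg hpint
    have hd0δ : d0 ≤ δ := Polynomial.natDegree_le_iff_degree_le.mpr (hpdeg c)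
    have hmem : ((c, d0) : Fin m × ℕ) ∈ Finset.univ ×ˢ Finset.range (δ + 1) := by
      simp [Finset.mem_product, Nat.lt_succ_iff, hd0δ]
    set lc := (p c).coeff d0 with hlc
    have hlcne : lc ≠ 0 := by
      rw [hlc, hd0, Polynomial.coeff_natDegree]
      exact Polynomial.leadingCoeff_ne_zero.mpr hpc0
    have herase : ∑ y ∈ (Finset.univ ×ˢ Finset.range (δ + 1)).erase (c, d0),
        (p y.1).coeff y.2 • Matrix.vecMul (E y.1) (M ^ y.2)
        = - (lc • Matrix.vecMul (E c) (M ^ d0)) := by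
      have := Finset.add_sum_erase _ (fun y : Fin m × ℕ =>
        (p y.1).coeff y.2 • Matrix.vecMul (E y.1) (M ^ y.2)) hmem
      rw [hsum] at this
      linear_combination (norm := module) this
    have hrep : Matrix.vecMul (E c) (M ^ d0)
        = ∑ y ∈ (Finset.univ ×ˢ Finset.range (δ + 1)).erase (c, d0),
          (-(lc⁻¹ * (p y.1).coeff y.2)) • Matrix.vecMul (E y.1) (M ^ y.2) := by
      have : ∑ y ∈ (Finset.univ ×ˢ Finset.range (δ + 1)).erase (c, d0),
          (-(lc⁻¹ * (p y.1).coeff y.2)) • Matrix.vecMul (E y.1) (M ^ y.2)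
          = (-lc⁻¹) • ∑ y ∈ (Finset.univ ×ˢ Finset.range (δ + 1)).erase (c, d0),
            (p y.1).coeff y.2 • Matrix.vecMul (E y.1) (M ^ y.2) := by
        rw [Finset.smul_sum]
        exact Finset.sum_congr rfl fun y _ => by rw [smul_smul]; ring_nf
      rw [this, herase, smul_neg, neg_smul, neg_neg, smul_smul,
        inv_mul_cancel₀ hlcne, one_smul]
    have hdep : DepEarlier E M s δ c d0 := by
      refine depEarlier_of_rep M E s _ id _ (fun y hy hne => ?_) hrep
      have hyS := Finset.mem_of_mem_erase hy
      have hyne : y ≠ (c, d0) := Finset.ne_of_mem_erase hy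
      have hy2δ : y.2 ≤ δ := by
        have := (Finset.mem_product.mp hyS).2
        simp only [Finset.mem_range, Nat.lt_succ_iff] at this
        exact this
      refine ⟨hy2δ, ?_⟩
      have hcne : (p y.1).coeff y.2 ≠ 0 := by
        intro h; apply hne; simp [h]
      have hy2le : y.2 ≤ (p y.1).natDegree := Polynomial.le_natDegree_of_ne_zero hcne
      have hpy : p y.1 ≠ 0 := fun h => hcne (by simp [h])
      have hdegle : ((p y.1).natDegree + s y.1 : ℕ) ≤ (d0 + s c : ℕ) := by
        have h1 : (p y.1).degree + (s y.1 : WithBot ℕ) ≤ rowDegVec s p := le_rowDeg s p y.1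
        rw [hrowval, Polynomial.degree_eq_natDegree hpy, ← Nat.cast_add] at h1
        exact_mod_cast h1
      rcases lt_or_eq_of_le (show s y.1 + y.2 ≤ s c + d0 by omega) with h | h
      · exact Or.inl h
      · -- equality: y.2 = natDegree, and pivot maximality
        have hy2eq : y.2 = (p y.1).natDegree := by omega
        have hdeq : (p y.1).degree + (s y.1 : WithBot ℕ) = rowDegVec s p := by
          rw [hrowval, Polynomial.degree_eq_natDegree hpy, ← Nat.cast_add]
          exact_mod_cast by omega
        have hle := hpiv.2 y.1 hdeq
        have hne' : y.1 ≠ c := by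
          intro hh
          apply hyne
          have : y.2 = d0 := by rw [hh] at h; omega
          exact Prod.ext hh this
        exact Or.inr ⟨h, lt_of_le_of_ne hle hne'⟩
    exact (hdm c).2 d0 hlt hdep
  · -- Part 2: existence
    intro c
    obtain ⟨l, hlsupp, hl⟩ := (Finsupp.mem_span_image_iff_linearCombination K).mp (hdm c).1
    have hlnz : ∀ y : Fin m × ℕ, l y ≠ 0 → y.2 ≤ δ ∧ keyLt s y (c, dm c) := by
      intro y hy
      exact (Finsupp.mem_supported K l).mp hlsupp (Finsupp.mem_support_iff.mpr hy)
    set q : Fin m → Polynomial K := fun j =>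
      ∑ d ∈ Finset.range (δ + 1), Polynomial.C (l (j, d)) * Polynomial.X ^ d with hq
    have hql : ∀ j d, (q j).coeff d = l (j, d) := by
      intro j d
      by_cases hd : d ≤ δ
      · simp [hq, Polynomial.finset_sum_coeff, Polynomial.coeff_C_mul,
          Polynomial.coeff_X_pow, Finset.sum_ite_eq, Nat.lt_succ_iff, hd]
      · have h0 : l (j, d) = 0 := by
          by_contra hz; exact hd (hlnz _ hz).1
        rw [h0]
        simp only [hq, Polynomial.finset_sum_coeff, Polynomial.coeff_C_mul,
          Polynomial.coeff_X_pow]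
        refine Finset.sum_eq_zero fun d' hd' => ?_
        have hne : d' ≠ d := by have := Finset.mem_range.mp hd'; omega
        rw [if_neg (Ne.symm hne), mul_zero]
    set p : Fin m → Polynomial K := fun j =>
      (if j = c then Polynomial.X ^ dm c else 0) - q j with hpdef
    have hco : ∀ j d, (p j).coeff d
        = (if j = c then ((Polynomial.X : Polynomial K) ^ dm c).coeff d else 0) - l (j, d) := by
      intro j d
      simp [hpdef, hql, apply_ite (fun f : Polynomial K => f.coeff d)]
    have hlcc : l (c, dm c) = 0 := by
      by_contra hz
      rcases (hlnz _ hz).2 with h | h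
      · exact absurd h (lt_irrefl _)
      · exact absurd h.2 (lt_irrefl _)
    have h1 : (p c).coeff (dm c) = 1 := by
      rw [hco]; simp [hlcc, Polynomial.coeff_X_pow]
    have hvanish : ∀ j d, (p j).coeff d ≠ 0 →
        d ≤ δ ∧ s j + d ≤ s c + dm c ∧ (s j + d = s c + dm c → j ≤ c) := by
      intro j d hne
      by_cases hjc : j = c ∧ d = dm c
      · exact ⟨by rw [hjc.2]; exact hdmδ c, le_of_eq (by rw [hjc.1, hjc.2]),
          fun _ => le_of_eq hjc.1⟩
      · have hlne : l (j, d) ≠ 0 := by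
          intro h0
          apply hne
          rw [hco, h0, sub_zero]
          by_cases hj : j = c
          · rw [if_pos hj, Polynomial.coeff_X_pow, if_neg (fun h => hjc ⟨hj, h⟩)]
          · simp [hj]
        rcases hlnz _ hlne with ⟨hδ', hk⟩
        rcases hk with hlt | ⟨heq, hlt⟩
        · exact ⟨hδ', le_of_lt hlt, fun h => absurd h (ne_of_lt hlt)⟩
        · exact ⟨hδ', le_of_eq heq, fun _ => le_of_lt hlt⟩
    have hdeg : ∀ i, (p i).degree ≤ (δ : WithBot ℕ) := by
      intro i
      rw [Polynomial.degree_le_iff_coeff_zero]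
      intro d hd
      by_contra hne
      have h1 := (hvanish i d hne).1
      have : (δ : ℕ) < d := by exact_mod_cast hd
      omega
    have hpc0 : p c ≠ 0 := fun h => by
      rw [h] at h1; simp at h1
    have hp0 : p ≠ 0 := fun h => hpc0 (by rw [h]; rfl)
    have hnatle : (p c).natDegree ≤ dm c := by
      by_contra h
      have hne : (p c).coeff (p c).natDegree ≠ 0 :=
        Polynomial.leadingCoeff_ne_zero.mpr hpc0
      have := (hvanish c _ hne).2.1
      omega
    have hnatc : (p c).natDegree = dm c :=
      le_antisymm hnatle (Polynomial.le_natDegree_of_ne_zero (h1 ▸ one_ne_zero))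
    have hdegc : (p c).degree = ((dm c : ℕ) : WithBot ℕ) := by
      rw [Polynomial.degree_eq_natDegree hpc0, hnatc]
    have hrowval : rowDegVec s p = ((s c + dm c : ℕ) : WithBot ℕ) := by
      apply le_antisymm
      · unfold rowDegVec
        apply Finset.sup_le
        intro j _
        by_cases hj : p j = 0
        · simp [hj]
        · have hlead : (p j).coeff (p j).natDegree ≠ 0 :=
            Polynomial.leadingCoeff_ne_zero.mpr hj
          have hb := (hvanish j _ hlead).2.1
          rw [Polynomial.degree_eq_natDegree hj, ← Nat.cast_add]
          exact_mod_cast by omega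
      · calc ((s c + dm c : ℕ) : WithBot ℕ)
            = (p c).degree + (s c : WithBot ℕ) := by
              rw [hdegc, ← Nat.cast_add]; exact_mod_cast by omega
          _ ≤ rowDegVec s p := le_rowDeg s p c
    have hpiv : IsPivotIdx s p c := by
      constructor
      · rw [hdegc, hrowval, ← Nat.cast_add]
        exact_mod_cast by omega
      · intro c' hc'
        have hpc' : p c' ≠ 0 := by
          intro h
          rw [h, Polynomial.degree_zero, WithBot.bot_add, hrowval] at hc'
          exact WithBot.bot_ne_coe hc'
        rw [Polynomial.degree_eq_natDegree hpc', hrowval, ← Nat.cast_add] at hc'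
        have hc'' : (p c').natDegree + s c' = s c + dm c := by exact_mod_cast hc'
        have hlead : (p c').coeff (p c').natDegree ≠ 0 :=
          Polynomial.leadingCoeff_ne_zero.mpr hpc'
        exact (hvanish c' _ hlead).2.2 (by omega)
    -- interpolant
    have haevalq : ∀ j, Polynomial.aeval M (q j)
        = ∑ d ∈ Finset.range (δ + 1), l (j, d) • M ^ d := by
      intro j
      rw [hq]
      rw [map_sum]
      refine Finset.sum_congr rfl fun d _ => ?_
      rw [_root_.map_mul, Polynomial.aeval_C, map_pow, Polynomial.aeval_X, ← Algebra.smul_def]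
    have hlsum : ∑ y ∈ Finset.univ ×ˢ Finset.range (δ + 1),
        l y • Matrix.vecMul (E y.1) (M ^ y.2) = Matrix.vecMul (E c) (M ^ dm c) := by
      rw [Finsupp.linearCombination_apply] at hl
      have hsub : l.support ⊆ Finset.univ ×ˢ Finset.range (δ + 1) := by
        intro y hy
        have := (hlnz y (Finsupp.mem_support_iff.mp hy)).1
        simp [Finset.mem_product, Nat.lt_succ_iff, this]
      rw [Finsupp.sum_of_support_subset l hsub _ (by intros; simp)] at hl
      exact hl
    have hint : IsInterpolant E M p := by
      rw [IsInterpolant]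
      have hterm : ∀ j, Matrix.vecMul (E j) (Polynomial.aeval M (p j))
          = (if j = c then Matrix.vecMul (E c) (M ^ dm c) else 0)
            - ∑ d ∈ Finset.range (δ + 1), l (j, d) • Matrix.vecMul (E j) (M ^ d) := by
        intro j
        have : Polynomial.aeval M (p j)
            = (if j = c then M ^ dm c else 0) - Polynomial.aeval M (q j) := by
          rw [hpdef]
          simp only [map_sub, apply_ite (Polynomial.aeval M), map_pow,
            Polynomial.aeval_X, map_zero]
        rw [this, Matrix.vecMul_sub, haevalq, vecMulSum]
        congr 1
        · split <;> rename_i hjc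
          · rw [hjc]
          · exact Matrix.vecMul_zero _
        · exact Finset.sum_congr rfl fun d _ => vecMulSmul _ _ _
      calc ∑ j, Matrix.vecMul (E j) (Polynomial.aeval M (p j))
          = (∑ j, if j = c then Matrix.vecMul (E c) (M ^ dm c) else 0)
            - ∑ j, ∑ d ∈ Finset.range (δ + 1), l (j, d) • Matrix.vecMul (E j) (M ^ d) := by
            rw [← Finset.sum_sub_distrib]
            exact Finset.sum_congr rfl fun j _ => hterm j
        _ = Matrix.vecMul (E c) (M ^ dm c)
            - ∑ y ∈ Finset.univ ×ˢ Finset.range (δ + 1),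
                l y • Matrix.vecMul (E y.1) (M ^ y.2) := by
            rw [Finset.sum_ite_eq' Finset.univ c, Finset.sum_product]
            simp
        _ = 0 := by rw [hlsum, sub_self]
    exact ⟨p, hp0, hdeg, hint, hpiv, hnatc⟩
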